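/- Let p be a prime. The intersection of any two p-arithmetic sequences is a finite union of p-arithmetic sequences. -/

import Mathlib

/-- A `p`-arithmetic sequence: a subset of `ℚ` of the form
`{a·p^{kn} + b : n ∈ ℕ₀}` for some `a, b ∈ ℚ` and `k ∈ ℕ₀`. -/
def IsPArithSeq (p : ℕ) (S : Set ℚ) : Prop :=
  ∃ (a b : ℚ) (k : ℕ), S = {x : ℚ | ∃ n : ℕ, x = a * (p : ℚ) ^ (k * n) + b}

/-- A finite union of `p`-arithmetic sequences. -/
def IsFinUnionPArith (p : ℕ) (S : Set ℚ) : Prop :=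
  ∃ (M : ℕ) (f : Fin M → Set ℚ), (∀ i, IsPArithSeq p (f i)) ∧ S = ⋃ i, f i

lemma parith_singleton (p : ℕ) (c : ℚ) : IsPArithSeq p {c} :=
  ⟨0, c, 0, by ext x; simp⟩

lemma finUnion_empty (p : ℕ) : IsFinUnionPArith p (∅ : Set ℚ) :=
  ⟨0, Fin.elim0, fun i => i.elim0, by simp⟩

lemma finUnion_of_parith {p : ℕ} {S : Set ℚ} (h : IsPArithSeq p S) :
    IsFinUnionPArith p S := ⟨1, fun _ => S, fun _ => h, by simp [Set.iUnion_const]⟩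

lemma finUnion_union {p : ℕ} {S T : Set ℚ} (hS : IsFinUnionPArith p S)
    (hT : IsFinUnionPArith p T) : IsFinUnionPArith p (S ∪ T) := by
  obtain ⟨M, f, hf, rfl⟩ := hS
  obtain ⟨N, g, hg, rfl⟩ := hT
  refine ⟨M + N, Sum.elim f g ∘ finSumFinEquiv.symm, ?_, ?_⟩
  · intro i
    rcases h : finSumFinEquiv.symm i with j | j <;> simp [h, hf, hg]
  · rw [show (⋃ i, (Sum.elim f g ∘ finSumFinEquiv.symm) i) = ⋃ x : Fin M ⊕ Fin N, Sum.elim f g x from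
      finSumFinEquiv.symm.surjective.iUnion_comp (fun x => Sum.elim f g x), Set.iUnion_sum]
    rfl

lemma finUnion_of_finite (p : ℕ) {S : Set ℚ} (h : S.Finite) :
    IsFinUnionPArith p S := by
  refine Set.Finite.induction_on S h (finUnion_empty p) ?_
  intro c s _ _ ih
  rw [Set.insert_eq]
  exact finUnion_union (finUnion_of_parith (parith_singleton _ _)) ih

/-- For a prime `p`, the intersection of any two `p`-arithmetic
sequences is a finite union of `p`-arithmetic sequences. -/
theorem stmt8 (p : ℕ) (hp : p.Prime) (S₁ S₂ : Set ℚ)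
    (h₁ : IsPArithSeq p S₁) (h₂ : IsPArithSeq p S₂) :
    IsFinUnionPArith p (S₁ ∩ S₂) := by
  classical
  haveI : Fact p.Prime := ⟨hp⟩
  have hp1 : (1:ℚ) < p := by exact_mod_cast hp.one_lt
  have hpq0 : (p:ℚ) ≠ 0 := by positivity
  obtain ⟨a₁, b₁, k₁, rfl⟩ := h₁
  obtain ⟨a₂, b₂, k₂, rfl⟩ := h₂
  by_cases hd₁ : a₁ = 0 ∨ k₁ = 0
  · apply finUnion_of_finite
    apply Set.Finite.subset (Set.finite_singleton (a₁ + b₁))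
    rintro x ⟨⟨n, rfl⟩, -⟩
    rcases hd₁ with h | h <;> simp [h]
  by_cases hd₂ : a₂ = 0 ∨ k₂ = 0
  · apply finUnion_of_finite
    apply Set.Finite.subset (Set.finite_singleton (a₂ + b₂))
    rintro x ⟨-, ⟨n, rfl⟩⟩
    rcases hd₂ with h | h <;> simp [h]
  push_neg at hd₁ hd₂
  obtain ⟨ha₁, hk₁⟩ := hd₁
  obtain ⟨ha₂, hk₂⟩ := hd₂
  have hk₁' : 0 < k₁ := Nat.pos_of_ne_zero hk₁
  have hk₂' : 0 < k₂ := Nat.pos_of_ne_zero hk₂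
  have hval : ∀ (a : ℚ) (j : ℕ), a ≠ 0 →
      padicValRat p (a * (p:ℚ) ^ j) = padicValRat p a + j := by
    intro a j ha
    rw [padicValRat.mul ha (pow_ne_zero _ hpq0), padicValRat.pow _,
      padicValRat.self hp.one_lt, mul_one]
  by_cases hb : b₁ = b₂
  · subst hb
    by_cases hA : ∃ n m : ℕ, a₁ * (p:ℚ) ^ (k₁*n) = a₂ * (p:ℚ) ^ (k₂*m)
    · -- structured case: intersection is a p-arith sequence
      set n₀ := Nat.find hA with hn₀def
      obtain ⟨m₀, hm₀⟩ := Nat.find_spec hA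
      set g := Nat.gcd k₁ k₂ with hgdef
      have hg0 : 0 < g := Nat.gcd_pos_of_pos_left _ hk₁'
      set e := k₁ / g with hedef
      set d := k₂ / g with hddef
      have heg : g * e = k₁ := Nat.mul_div_cancel' (Nat.gcd_dvd_left _ _)
      have hdg : g * d = k₂ := Nat.mul_div_cancel' (Nat.gcd_dvd_right _ _)
      have hKe : k₁ * d = k₂ * e := by rw [← heg, ← hdg]; ring
      have cop : Nat.Coprime e d := Nat.coprime_div_gcd_div_gcd hg0
      apply finUnion_of_parith
      refine ⟨a₁ * (p:ℚ) ^ (k₁ * n₀), b₁, k₁ * d, ?_⟩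
      ext x
      simp only [Set.mem_inter_iff, Set.mem_setOf_eq]
      constructor
      · rintro ⟨⟨n, rfl⟩, ⟨m, hm⟩⟩
        have hE : a₁ * (p:ℚ) ^ (k₁*n) = a₂ * (p:ℚ) ^ (k₂*m) := by linarith
        have hn0 : n₀ ≤ n := Nat.find_min' hA ⟨m, hE⟩
        -- cross multiply
        have hcross : (p:ℚ) ^ (k₁*n + k₂*m₀) = (p:ℚ) ^ (k₂*m + k₁*n₀) := by
          have h2 : (a₁ * (p:ℚ)^(k₁*n)) * (a₂ * (p:ℚ)^(k₂*m₀))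
              = (a₂ * (p:ℚ)^(k₂*m)) * (a₁ * (p:ℚ)^(k₁*n₀)) := by
            rw [hE, hm₀]
          have h3 : (a₁ * a₂) * ((p:ℚ)^(k₁*n) * (p:ℚ)^(k₂*m₀))
              = (a₁ * a₂) * ((p:ℚ)^(k₂*m) * (p:ℚ)^(k₁*n₀)) := by
            rw [show (a₁ * a₂) * ((p:ℚ)^(k₁*n) * (p:ℚ)^(k₂*m₀))
              = (a₁ * (p:ℚ)^(k₁*n)) * (a₂ * (p:ℚ)^(k₂*m₀)) by ring, h2]; ring
          have h4 := mul_left_cancel₀ (mul_ne_zero ha₁ ha₂) h3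
          rw [← pow_add, ← pow_add] at h4
          exact h4
        have hexp : k₁*n + k₂*m₀ = k₂*m + k₁*n₀ :=
          (pow_right_strictMono₀ hp1).injective hcross
        have hmul1 : k₁*n₀ ≤ k₁*n := Nat.mul_le_mul_left _ hn0
        have hmul2 : k₂*m₀ ≤ k₂*m := by linarith
        have hm0le : m₀ ≤ m := Nat.le_of_mul_le_mul_left hmul2 hk₂'
        have hk : k₁*(n - n₀) = k₂*(m - m₀) := by zify [hn0, hm0le]; linarith
        have hdvd : d ∣ e * (n - n₀) := by
          have : g * d ∣ g * (e * (n - n₀)) := by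
            rw [← mul_assoc, heg, hk, ← hdg]
            exact dvd_mul_right _ _
          exact (mul_dvd_mul_iff_left hg0.ne').mp this
        obtain ⟨s, hs⟩ := (cop.symm.dvd_of_dvd_mul_left hdvd)
        have hn : n = n₀ + d * s := by omega
        refine ⟨s, ?_⟩
        rw [hn, show k₁ * (n₀ + d * s) = k₁ * n₀ + (k₁ * d) * s by ring, pow_add,
          ← mul_assoc]
      · rintro ⟨s, rfl⟩
        constructor
        · refine ⟨n₀ + d * s, ?_⟩
          rw [show k₁ * (n₀ + d * s) = k₁ * n₀ + (k₁ * d) * s by ring, pow_add,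
            ← mul_assoc]
        · refine ⟨m₀ + e * s, ?_⟩
          rw [show k₂ * (m₀ + e * s) = k₂ * m₀ + (k₁ * d) * s by rw [hKe]; ring,
            pow_add, ← mul_assoc, ← hm₀]
    · -- empty intersection
      have hE : {x : ℚ | ∃ n, x = a₁ * (p:ℚ)^(k₁*n) + b₁}
          ∩ {x : ℚ | ∃ n, x = a₂ * (p:ℚ)^(k₂*n) + b₁} = ∅ := by
        ext x
        simp only [Set.mem_inter_iff, Set.mem_setOf_eq, Set.mem_empty_iff_false,
          iff_false, not_and]
        rintro ⟨n, rfl⟩ ⟨m, hm⟩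
        exact hA ⟨n, m, by linarith⟩
      rw [hE]
      exact finUnion_empty p
  · -- different offsets: finite intersection
    apply finUnion_of_finite
    set c := b₂ - b₁ with hcdef
    have hc0 : c ≠ 0 := sub_ne_zero.mpr (Ne.symm hb)
    set v₁ := padicValRat p a₁
    set v₂ := padicValRat p a₂
    set vc := padicValRat p c
    set M₀ := (vc - v₂).toNat with hM₀def
    set B := |a₂| * (p:ℚ) ^ (k₂ * M₀) + |c| with hBdef
    set N := max ((vc - v₁).toNat) ⌈B / |a₁|⌉₊ with hNdef
    have key : ∀ n m : ℕ, a₁ * (p:ℚ)^(k₁*n) - a₂ * (p:ℚ)^(k₂*m) = c → n ≤ N := by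
      intro n m heq
      by_contra hgt
      push_neg at hgt
      have hn1 : (vc - v₁).toNat < n := lt_of_le_of_lt (le_max_left _ _) hgt
      have hn2 : ⌈B / |a₁|⌉₊ < n := lt_of_le_of_lt (le_max_right _ _) hgt
      have ht1 : a₁ * (p:ℚ)^(k₁*n) ≠ 0 := mul_ne_zero ha₁ (pow_ne_zero _ hpq0)
      have ht2 : a₂ * (p:ℚ)^(k₂*m) ≠ 0 := mul_ne_zero ha₂ (pow_ne_zero _ hpq0)
      have hmin : min (v₁ + (k₁*n : ℕ)) (v₂ + (k₂*m : ℕ)) ≤ vc := by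
        have hsum : a₁ * (p:ℚ)^(k₁*n) + (-(a₂ * (p:ℚ)^(k₂*m))) ≠ 0 := by
          rw [← sub_eq_add_neg, heq]; exact hc0
        have := padicValRat.min_le_padicValRat_add (p := p) hsum
        rw [padicValRat.neg, hval _ _ ha₁, hval _ _ ha₂] at this
        rw [show a₁ * (p:ℚ)^(k₁*n) + (-(a₂ * (p:ℚ)^(k₂*m)))
          = a₁ * (p:ℚ)^(k₁*n) - a₂ * (p:ℚ)^(k₂*m) from (sub_eq_add_neg _ _).symm,
          heq] at this
        exact this
      -- left component exceeds vc
      have hnkn : (n : ℤ) ≤ ((k₁ * n : ℕ) : ℤ) := by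
        exact_mod_cast Nat.le_mul_of_pos_left n hk₁'
      have hL : vc < v₁ + ((k₁*n : ℕ) : ℤ) := by
        have h1 : vc - v₁ < (n : ℤ) := by omega
        linarith
      have hR : v₂ + ((k₂*m : ℕ) : ℤ) ≤ vc :=
        (min_le_iff.mp hmin).resolve_left (not_le.mpr hL)
      have hmkm : (m : ℤ) ≤ ((k₂ * m : ℕ) : ℤ) := by
        exact_mod_cast Nat.le_mul_of_pos_left m hk₂'
      have hmM : m ≤ M₀ := by omega
      have hppos : (0:ℚ) < (p:ℚ) := by positivity
      have habs : |a₁| * (p:ℚ)^(k₁*n) ≤ B := by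
        have h5 : a₁ * (p:ℚ)^(k₁*n) = a₂ * (p:ℚ)^(k₂*m) + c := by linarith
        calc |a₁| * (p:ℚ)^(k₁*n) = |a₁ * (p:ℚ)^(k₁*n)| := by
              rw [abs_mul, abs_of_pos (pow_pos hppos _)]
          _ ≤ |a₂ * (p:ℚ)^(k₂*m)| + |c| := by rw [h5]; exact abs_add_le _ _
          _ = |a₂| * (p:ℚ)^(k₂*m) + |c| := by
              rw [abs_mul, abs_of_pos (pow_pos hppos _)]
          _ ≤ |a₂| * (p:ℚ)^(k₂*M₀) + |c| := by
              have : (p:ℚ)^(k₂*m) ≤ (p:ℚ)^(k₂*M₀) :=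
                pow_le_pow_right₀ (le_of_lt hp1) (Nat.mul_le_mul_left _ hmM)
              have ha2 : (0:ℚ) ≤ |a₂| := abs_nonneg _
              nlinarith
      have hn3 : (n:ℚ) < (p:ℚ)^(k₁*n) := by
        have h6 : n < 2 ^ n := Nat.lt_two_pow_self
        have h7 : 2 ^ n ≤ p ^ n := Nat.pow_le_pow_left hp.two_le n
        have h8 : p ^ n ≤ p ^ (k₁ * n) :=
          Nat.pow_le_pow_right hp.pos (Nat.le_mul_of_pos_left n hk₁')
        exact_mod_cast lt_of_lt_of_le h6 (le_trans h7 h8)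
      have ha1pos : (0:ℚ) < |a₁| := abs_pos.mpr ha₁
      have h9 : (n:ℚ) < B / |a₁| := by
        rw [lt_div_iff₀ ha1pos]
        calc (n:ℚ) * |a₁| = |a₁| * n := by ring
          _ < |a₁| * (p:ℚ)^(k₁*n) := by
              exact mul_lt_mul_of_pos_left hn3 ha1pos
          _ ≤ B := habs
      have h10 : n < ⌈B / |a₁|⌉₊ := Nat.lt_ceil.mpr h9
      omega
    apply Set.Finite.subset ((Set.finite_Iic N).image
      (fun n => a₁ * (p:ℚ)^(k₁*n) + b₁))
    rintro x ⟨⟨n, rfl⟩, ⟨m, hm⟩⟩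
    exact ⟨n, key n m (by linarith), rfl⟩
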